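/- Let m ≥ 3 and let q ∈ ℂ be a primitive m-th root of unity, and let λ ∈ ℂ with λ² = 1. Define (m+1)×(m+1) matrices K, E, F acting on the standard basis v_0, …, v_m of ℂ^{m+1} by: K·v_p = λ q^{−p}·v_p for 0 ≤ p ≤ m; F·v_p = v_{p+1} for 0 ≤ p ≤ m−1 and F·v_m = 0; E·v_0 = 0 and E·v_p = (p)_q·(1−p)_q·v_{p−1} for 1 ≤ p ≤ m. Then: (i) (K, E, F) is a representation of U_q(sl(2)); (ii) the line ℂ·v_m is invariant under K, E and F; (iii) this representation is not completely reducible: there is no linear subspace W of ℂ^{m+1} invariant under K, E and F with ℂ^{m+1} = ℂ·v_m ⊕ W. -/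

import Mathlib

open Matrix

noncomputable section

/-- The q-integer `(p)_q = (q^p - q^{-p})/(q - q⁻¹)`. -/
def qint (q : ℂ) (p : ℤ) : ℂ := (q ^ p - q ^ (-p)) / (q - q⁻¹)

/-- A representation of `U_q(sl(2))` of dimension `N`: a triple `(K, E, F)` of `N×N`
complex matrices with `K` invertible satisfying the defining relations. -/
def IsRep (q : ℂ) {N : ℕ} (K E F : Matrix (Fin N) (Fin N) ℂ) : Prop :=
  IsUnit K ∧
  K * E * K⁻¹ = q • E ∧
  K * F * K⁻¹ = q⁻¹ • F ∧
  E * F - F * E = (q - q⁻¹)⁻¹ • (K ^ 2 - K⁻¹ ^ 2)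

/-- A subspace invariant under the three matrices `K`, `E`, `F`. -/
def InvariantSub {N : ℕ} (K E F : Matrix (Fin N) (Fin N) ℂ)
    (W : Submodule ℂ (Fin N → ℂ)) : Prop :=
  (∀ v ∈ W, K.mulVec v ∈ W) ∧ (∀ v ∈ W, E.mulVec v ∈ W) ∧ (∀ v ∈ W, F.mulVec v ∈ W)

/-- An irreducible representation of `U_q(sl(2))` of dimension `N`. -/
def IsIrrep (q : ℂ) {N : ℕ} (K E F : Matrix (Fin N) (Fin N) ℂ) : Prop :=
  IsRep q K E F ∧ 1 ≤ N ∧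
  ∀ W : Submodule ℂ (Fin N → ℂ), InvariantSub K E F W → W = ⊥ ∨ W = ⊤

/-- The `K` matrix of the non completely reducible `(m+1)`-dimensional module:
`K·v_p = λ q^{-p} v_p`. -/
def XK (q lam : ℂ) (m : ℕ) : Matrix (Fin (m + 1)) (Fin (m + 1)) ℂ :=
  Matrix.diagonal fun p => lam * q ^ (-(p : ℤ))

/-- Its `F` matrix: `F·v_p = v_{p+1}` for `p ≤ m−1`, `F·v_m = 0`. -/
def XF (m : ℕ) : Matrix (Fin (m + 1)) (Fin (m + 1)) ℂ :=
  Matrix.of fun i j => if (i : ℕ) = (j : ℕ) + 1 then 1 else 0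

/-- Its `E` matrix: `E·v_0 = 0`, `E·v_p = (p)_q (1−p)_q v_{p−1}` for `1 ≤ p ≤ m`. -/
def XE (q : ℂ) (m : ℕ) : Matrix (Fin (m + 1)) (Fin (m + 1)) ℂ :=
  Matrix.of fun i j =>
    if (j : ℕ) = (i : ℕ) + 1 then qint q (j : ℕ) * qint q (1 - (j : ℕ) : ℤ) else 0

/-! ### Auxiliary lemmas -/

theorem qkey (q : ℂ) (hq0 : q ≠ 0) (hd : q - q⁻¹ ≠ 0) (p : ℤ) :
    qint q (p+1) * qint q (-p) - qint q p * qint q (1-p)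
      = (q ^ (-2*p) - q ^ (2*p)) / (q - q⁻¹) := by
  have hu : q ^ p ≠ 0 := zpow_ne_zero p hq0
  have h1 : q ^ (p+1) = q ^ p * q := by rw [zpow_add_one₀ hq0]
  have h2 : q ^ (-p) = (q ^ p)⁻¹ := by rw [_root_.zpow_neg]
  have h3 : q ^ (1-p) = q * (q ^ p)⁻¹ := by
    rw [sub_eq_add_neg, zpow_add₀ hq0, zpow_one, _root_.zpow_neg]
  have h5 : q ^ (2*p) = (q ^ p)^2 := by
    rw [show 2*p = p+p by ring, zpow_add₀ hq0, sq]
  have h4 : q ^ (-2*p) = ((q ^ p)^2)⁻¹ := by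
    rw [show -2*p = -(2*p) by ring, _root_.zpow_neg, h5]
  have h6 : q ^ (-(p+1)) = (q ^ p * q)⁻¹ := by rw [_root_.zpow_neg, h1]
  have h7 : q ^ (-(1-p)) = (q * (q ^ p)⁻¹)⁻¹ := by rw [_root_.zpow_neg, h3]
  unfold qint
  simp only [neg_neg]
  rw [div_mul_div_comm, div_mul_div_comm, div_sub_div_same,
    div_eq_div_iff (mul_ne_zero hd hd) hd]
  rw [h1, h2, h3, h4, h5, h6, h7]
  generalize q ^ p = u at hu ⊢
  field_simp
  ring

def cE (q : ℂ) (p : ℤ) : ℂ := qint q p * qint q (1 - p)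

lemma XE_apply (q : ℂ) (m : ℕ) (i j : Fin (m+1)) :
    (XE q m) i j = if (j : ℕ) = (i : ℕ) + 1 then cE q (j : ℕ) else 0 := rfl

lemma XF_apply (m : ℕ) (i j : Fin (m+1)) :
    (XF m) i j = if (i : ℕ) = (j : ℕ) + 1 then 1 else 0 := rfl

lemma EF_apply (q : ℂ) (m : ℕ) (i j : Fin (m+1)) :
    (XE q m * XF m) i j = if i = j ∧ (i:ℕ) < m then cE q ((i:ℕ)+1 : ℤ) else 0 := by
  rw [Matrix.mul_apply]
  by_cases him : (i:ℕ) < m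
  · rw [Finset.sum_eq_single (⟨(i:ℕ)+1, by omega⟩ : Fin (m+1))]
    · simp only [XE_apply, XF_apply, Fin.val_mk]
      by_cases hij : i = j
      · subst hij
        simp only [him, and_true, eq_self_iff_true, true_and, if_true, mul_one]
        have hc : ((((i:ℕ)+1 : ℕ)) : ℤ) = ((i:ℕ) : ℤ) + 1 := by push_cast; ring
        rw [hc]
      · have h2 : ¬ ((i:ℕ)+1 = (j:ℕ)+1) :=
          fun h => hij (Fin.ext (by omega))
        simp [h2, hij, Fin.val_inj]
    · intro k _ hk
      have : (k:ℕ) ≠ (i:ℕ)+1 :=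
        fun h => hk (Fin.ext (show (k:ℕ) = (i:ℕ)+1 from h))
      simp [XE_apply, this]
    · simp
  · rw [if_neg (by tauto)]
    apply Finset.sum_eq_zero
    intro k _
    have hkm : (k:ℕ) < m + 1 := k.isLt
    have him' : (i:ℕ) < m + 1 := i.isLt
    have : (k:ℕ) ≠ (i:ℕ)+1 := by omega
    simp [XE_apply, this]

lemma FE_apply (q : ℂ) (m : ℕ) (i j : Fin (m+1)) :
    (XF m * XE q m) i j = if i = j ∧ 1 ≤ (i:ℕ) then cE q ((i:ℕ) : ℤ) else 0 := by
  rw [Matrix.mul_apply]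
  by_cases him : 1 ≤ (i:ℕ)
  · rw [Finset.sum_eq_single (⟨(i:ℕ)-1, by omega⟩ : Fin (m+1))]
    · simp only [XE_apply, XF_apply, Fin.val_mk]
      have h1 : (i:ℕ) = ((i:ℕ)-1) + 1 := by omega
      rw [if_pos h1, one_mul]
      by_cases hij : i = j
      · rw [if_pos (by omega : (j:ℕ) = ((i:ℕ)-1)+1), if_pos ⟨hij, him⟩, hij]
      · rw [if_neg (fun h => hij (Fin.ext (by omega : (i:ℕ) = (j:ℕ)))),
          if_neg (by tauto)]
    · intro k _ hk
      have : ¬ ((i:ℕ) = (k:ℕ)+1) :=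
        fun h => hk (Fin.ext (show (k:ℕ) = (i:ℕ)-1 by omega))
      simp [XF_apply, this]
    · simp
  · rw [if_neg (by tauto)]
    apply Finset.sum_eq_zero
    intro k _
    have : ¬ ((i:ℕ) = (k:ℕ)+1) := by omega
    simp [XF_apply, this]

lemma conj_diag (q lam : ℂ) (hq0 : q ≠ 0) (hlam0 : lam ≠ 0) (a b : ℤ) (c : ℂ) :
    lam * q^(-a) * c * (lam * q^(-b))⁻¹ = q^(b-a) * c := by
  have e : (q ^ (-b : ℤ))⁻¹ = q ^ b := by rw [← _root_.zpow_neg, neg_neg]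
  rw [mul_inv, e]
  have e2 : q ^ (b - a) = q ^ (-a) * q ^ b := by
    rw [← zpow_add₀ hq0]; congr 1; ring
  rw [e2]
  field_simp

lemma mulVec_single' {N : ℕ} (M : Matrix (Fin N) (Fin N) ℂ) (j : Fin N) (x : ℂ) :
    M *ᵥ Pi.single j x = fun i => M i j * x :=
  funext fun _ => dotProduct_single _ _ _

/-- For `q` a primitive `m`-th root of unity (`m ≥ 3`) and `λ² = 1`, the triple
`(XK, XE, XF)` is an `(m+1)`-dimensional representation of `U_q(sl(2))`, the line `ℂ·v_m`
is an invariant subspace, and this representation is not completely reducible: no invariant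
subspace `W` is a complement of `ℂ·v_m` in `ℂ^{m+1}`. -/
theorem stmt17 (m : ℕ) (hm : 3 ≤ m) (q : ℂ) (hq : IsPrimitiveRoot q m)
    (lam : ℂ) (hlam : lam ^ 2 = 1) :
    IsRep q (XK q lam m) (XE q m) (XF m) ∧
    InvariantSub (XK q lam m) (XE q m) (XF m)
      (Submodule.span ℂ {Pi.single (Fin.last m) (1 : ℂ)}) ∧
    ¬ ∃ W : Submodule ℂ (Fin (m + 1) → ℂ),
        InvariantSub (XK q lam m) (XE q m) (XF m) W ∧
        IsCompl (Submodule.span ℂ {Pi.single (Fin.last m) (1 : ℂ)}) W := by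
  have hm0 : m ≠ 0 := by omega
  have hq0 : q ≠ 0 := hq.ne_zero hm0
  have hqm : q ^ (m:ℕ) = (1:ℂ) := hq.pow_eq_one
  have hqmz : q ^ (m:ℤ) = (1:ℂ) := by rw [zpow_natCast, hqm]
  have hqmn : q ^ (-(m:ℤ)) = (1:ℂ) := by rw [_root_.zpow_neg, hqmz, inv_one]
  have hq1 : q ≠ 1 := by
    intro h
    have := Nat.le_of_dvd one_pos (hq.dvd_of_pow_eq_one 1 (by rw [pow_one, h]))
    omega
  have hq2 : q ^ (2:ℕ) ≠ 1 := by
    intro h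
    have := Nat.le_of_dvd two_pos (hq.dvd_of_pow_eq_one 2 h)
    omega
  have hd : q - q⁻¹ ≠ 0 := by
    intro h
    apply hq2
    have hqq : q = q⁻¹ := sub_eq_zero.mp h
    rw [pow_two]
    nth_rewrite 2 [hqq]
    exact mul_inv_cancel₀ hq0
  have hlam0 : lam ≠ 0 := by
    intro h; rw [h] at hlam; simp at hlam
  have hdent : ∀ p : Fin (m+1), lam * q ^ (-(p:ℤ)) ≠ 0 :=
    fun p => mul_ne_zero hlam0 (zpow_ne_zero _ hq0)
  have hdiag1 : ∀ p : Fin (m+1),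
      (lam * q ^ (-(p:ℤ))) * (lam * q ^ (-(p:ℤ)))⁻¹ = 1 :=
    fun p => mul_inv_cancel₀ (hdent p)
  have hKmul : XK q lam m * Matrix.diagonal (fun p : Fin (m+1) => (lam * q ^ (-(p:ℤ)))⁻¹) = 1 := by
    rw [XK, Matrix.diagonal_mul_diagonal]
    rw [show (fun p : Fin (m+1) => lam * q ^ (-(p:ℤ)) * (lam * q ^ (-(p:ℤ)))⁻¹)
        = fun _ => (1:ℂ) from funext fun p => hdiag1 p]
    exact Matrix.diagonal_one
  have hKinv : (XK q lam m)⁻¹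
      = Matrix.diagonal (fun p : Fin (m+1) => (lam * q ^ (-(p:ℤ)))⁻¹) :=
    Matrix.inv_eq_right_inv hKmul
  have hKmul' : Matrix.diagonal (fun p : Fin (m+1) => (lam * q ^ (-(p:ℤ)))⁻¹) * XK q lam m = 1 := by
    rw [XK, Matrix.diagonal_mul_diagonal]
    rw [show (fun p : Fin (m+1) => (lam * q ^ (-(p:ℤ)))⁻¹ * (lam * q ^ (-(p:ℤ))))
        = fun _ => (1:ℂ) from funext fun p => by rw [mul_comm]; exact hdiag1 p]
    exact Matrix.diagonal_one
  have hKunit : IsUnit (XK q lam m) :=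
    ⟨⟨XK q lam m, Matrix.diagonal (fun p : Fin (m+1) => (lam * q ^ (-(p:ℤ)))⁻¹),
      hKmul, hKmul'⟩, rfl⟩
  -- relation K E K⁻¹ = q E
  have hrelE : XK q lam m * XE q m * (XK q lam m)⁻¹ = q • XE q m := by
    rw [hKinv, XK]
    ext i j
    simp only [Matrix.diagonal_mul, Matrix.mul_diagonal, Matrix.smul_apply,
      smul_eq_mul, XE_apply]
    by_cases h : (j:ℕ) = (i:ℕ)+1
    · rw [if_pos h]
      have hj : ((j:ℕ):ℤ) = ((i:ℕ):ℤ)+1 := by exact_mod_cast h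
      rw [conj_diag q lam hq0 hlam0 _ _ _, hj,
        show ((i:ℤ)+1) - (i:ℤ) = (1:ℤ) from by push_cast; ring, zpow_one]
    · rw [if_neg h, mul_zero, zero_mul, mul_zero]
  -- relation K F K⁻¹ = q⁻¹ F
  have hrelF : XK q lam m * XF m * (XK q lam m)⁻¹ = q⁻¹ • XF m := by
    rw [hKinv, XK]
    ext i j
    simp only [Matrix.diagonal_mul, Matrix.mul_diagonal, Matrix.smul_apply,
      smul_eq_mul, XF_apply]
    by_cases h : (i:ℕ) = (j:ℕ)+1
    · rw [if_pos h]
      have hi : ((i:ℕ):ℤ) = ((j:ℕ):ℤ)+1 := by exact_mod_cast h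
      rw [conj_diag q lam hq0 hlam0 _ _ _, hi,
        show (j:ℤ) - ((j:ℤ)+1) = (-1:ℤ) from by push_cast; ring, _root_.zpow_neg_one]
    · rw [if_neg h, mul_zero, zero_mul, mul_zero]
  -- relation E F - F E
  have hrelC : XE q m * XF m - XF m * XE q m
      = (q - q⁻¹)⁻¹ • ((XK q lam m) ^ 2 - (XK q lam m)⁻¹ ^ 2) := by
    have hK2 : (XK q lam m)^2
        = Matrix.diagonal (fun p : Fin (m+1) => (lam * q ^ (-(p:ℤ)))^2) := by
      rw [sq, XK, Matrix.diagonal_mul_diagonal,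
        show (fun p : Fin (m+1) => (lam * q ^ (-(p:ℤ))) * (lam * q ^ (-(p:ℤ))))
          = fun p : Fin (m+1) => (lam * q ^ (-(p:ℤ)))^2 from funext fun p => (pow_two _).symm]
    have hKi2 : ((XK q lam m)⁻¹)^2
        = Matrix.diagonal (fun p : Fin (m+1) => ((lam * q ^ (-(p:ℤ)))⁻¹)^2) := by
      rw [hKinv, sq, Matrix.diagonal_mul_diagonal,
        show (fun p : Fin (m+1) => (lam * q ^ (-(p:ℤ)))⁻¹ * (lam * q ^ (-(p:ℤ)))⁻¹)
          = fun p : Fin (m+1) => ((lam * q ^ (-(p:ℤ)))⁻¹)^2 from funext fun p => (pow_two _).symm]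
    ext i j
    rw [Matrix.sub_apply, EF_apply, FE_apply, hK2, hKi2]
    simp only [Matrix.smul_apply, Matrix.sub_apply, Matrix.diagonal_apply, smul_eq_mul]
    by_cases hij : i = j
    · subst hij
      rw [if_pos rfl, if_pos rfl]
      have hrhs : (q - q⁻¹)⁻¹ * ((lam * q ^ (-(i:ℤ)))^2 - ((lam * q ^ (-(i:ℤ)))⁻¹)^2)
          = (q ^ (-2*((i:ℕ):ℤ)) - q ^ (2*((i:ℕ):ℤ)))/(q - q⁻¹) := by
        have x1 : (q ^ (-(i:ℤ)))^2 = q ^ (-2*((i:ℕ):ℤ)) := by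
          rw [sq, ← zpow_add₀ hq0]
          congr 1
          push_cast
          ring
        have x2 : ((q ^ (-(i:ℤ)))⁻¹)^2 = q ^ (2*((i:ℕ):ℤ)) := by
          rw [← _root_.zpow_neg, neg_neg, sq, ← zpow_add₀ hq0]
          congr 1
          push_cast
          ring
        rw [mul_pow, mul_inv, mul_pow, x1, x2, hlam, inv_pow, hlam, inv_one,
          one_mul, one_mul, inv_mul_eq_div]
      rw [hrhs]
      have hkey : cE q (((i:ℕ):ℤ)+1) - cE q ((i:ℕ):ℤ)
          = (q ^ (-2*((i:ℕ):ℤ)) - q ^ (2*((i:ℕ):ℤ)))/(q - q⁻¹) := by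
        unfold cE
        rw [show (1 : ℤ) - (((i:ℕ):ℤ)+1) = -((i:ℕ):ℤ) from by ring]
        exact qkey q hq0 hd ((i:ℕ):ℤ)
      rcases Nat.lt_or_ge (i:ℕ) m with him | him
      · by_cases h0 : 1 ≤ (i:ℕ)
        · rw [if_pos ⟨rfl, him⟩, if_pos ⟨rfl, h0⟩]
          exact hkey
        · have hi0 : ((i:ℕ):ℤ) = 0 := by omega
          rw [if_pos ⟨rfl, him⟩, if_neg (by tauto)]
          have hc0 : cE q ((i:ℕ):ℤ) = 0 := by
            rw [hi0]
            unfold cE qint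
            norm_num
          rw [← hkey, hc0, sub_zero]
      · have hieq : (i:ℕ) = m := by have := i.isLt; omega
        rw [if_neg (by omega : ¬(i = i ∧ (i:ℕ) < m)), if_pos ⟨rfl, by omega⟩]
        have hc1 : cE q (((i:ℕ):ℤ)+1) = 0 := by
          unfold cE qint
          rw [show (((i:ℕ):ℤ)+1) = (m:ℤ)+1 from by rw [hieq],
            show (1:ℤ) - ((m:ℤ)+1) = -(m:ℤ) from by ring]
          rw [hqmn, neg_neg, hqmz, sub_self, zero_div, mul_zero]
        rw [← hkey, hc1, zero_sub]
    · rw [if_neg (by tauto), if_neg (by tauto), if_neg hij, if_neg hij]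
      simp
  -- invariance of the line
  set v : Fin (m+1) → ℂ := Pi.single (Fin.last m) (1:ℂ) with hv
  have hvlast : (Fin.last m : ℕ) = m := rfl
  have hKv : (XK q lam m).mulVec v = lam • v := by
    rw [hv, mulVec_single']
    funext i
    simp only [Pi.smul_apply, smul_eq_mul]
    by_cases h : i = Fin.last m
    · subst h
      rw [Pi.single_eq_same, XK, Matrix.diagonal_apply_eq, mul_one, mul_one]
      rw [show (-((Fin.last m):ℤ)) = -(m:ℤ) from by norm_cast, hqmn, mul_one]
    · rw [Pi.single_eq_of_ne h, XK, Matrix.diagonal_apply_ne _ h, zero_mul, mul_zero]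
  have hqintm : qint q ((m:ℕ):ℤ) = 0 := by
    unfold qint
    rw [hqmz, hqmn, sub_self, zero_div]
  have hEv : (XE q m).mulVec v = 0 := by
    rw [hv, mulVec_single']
    funext i
    simp only [Pi.zero_apply, mul_one]
    rw [XE_apply]
    by_cases h : (Fin.last m : ℕ) = (i:ℕ)+1
    · rw [if_pos h]
      unfold cE
      rw [show (((Fin.last m : ℕ)):ℤ) = ((m:ℕ):ℤ) from by rw [hvlast], hqintm, zero_mul]
    · rw [if_neg h]
  have hFv : (XF m).mulVec v = 0 := by
    rw [hv, mulVec_single']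
    funext i
    simp only [Pi.zero_apply, mul_one]
    rw [XF_apply]
    have : ¬ ((i:ℕ) = (Fin.last m : ℕ)+1) := by
      have := i.isLt
      rw [hvlast]
      omega
    rw [if_neg this]
  have hinv : InvariantSub (XK q lam m) (XE q m) (XF m)
      (Submodule.span ℂ {v}) := by
    refine ⟨?_, ?_, ?_⟩ <;> intro w hw <;>
      obtain ⟨a, rfl⟩ := Submodule.mem_span_singleton.mp hw <;>
      rw [Matrix.mulVec_smul]
    · rw [hKv]
      exact Submodule.smul_mem _ _ (Submodule.smul_mem _ _
        (Submodule.mem_span_singleton_self _))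
    · rw [hEv, smul_zero]; exact Submodule.zero_mem _
    · rw [hFv, smul_zero]; exact Submodule.zero_mem _
  refine ⟨⟨hKunit, hrelE, hrelF, hrelC⟩, hinv, ?_⟩
  -- no invariant complement
  rintro ⟨W, ⟨hWK, _hWE, hWF⟩, hcompl⟩
  have hvne : v ≠ 0 := by
    intro h
    have := congrFun h (Fin.last m)
    rw [hv, Pi.single_eq_same] at this
    exact one_ne_zero this
  have hvnotW : v ∉ W := by
    intro hmem
    have : v ∈ Submodule.span ℂ {v} ⊓ W :=
      ⟨Submodule.mem_span_singleton_self _, hmem⟩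
    rw [hcompl.inf_eq_bot] at this
    exact hvne (by simpa using this)
  set i1 : Fin (m+1) := ⟨m-1, by omega⟩ with hi1
  set v1 : Fin (m+1) → ℂ := Pi.single i1 (1:ℂ) with hv1
  -- F sends v1 to v
  have hFv1 : (XF m).mulVec v1 = v := by
    rw [hv1, mulVec_single', hv]
    funext i
    rw [XF_apply]
    by_cases h : i = Fin.last m
    · subst h
      rw [Pi.single_eq_same, if_pos (show ((Fin.last m):ℕ) = (i1:ℕ)+1 from by simp only [hvlast, hi1, Fin.val_mk]; omega), mul_one]
    · rw [Pi.single_eq_of_ne h, if_neg, mul_one]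
      intro hcon
      apply h
      apply Fin.ext
      rw [hvlast]
      have : (i1:ℕ) = m - 1 := rfl
      omega
  -- q^{-(m-1)} = q
  have hqi1 : q ^ (-((i1:Fin (m+1)):ℤ)) = q := by
    have h1 : ((i1:Fin (m+1)):ℤ) = (m:ℤ) - 1 := by
      have : ((i1:Fin (m+1)):ℕ) = m - 1 := rfl
      omega
    rw [h1, show -((m:ℤ)-1) = 1 + -(m:ℤ) from by ring, zpow_add₀ hq0, zpow_one, hqmn,
      mul_one]
  have hKv1 : (XK q lam m).mulVec v1 = (lam * q) • v1 := by
    rw [hv1, mulVec_single']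
    funext i
    simp only [Pi.smul_apply, smul_eq_mul]
    by_cases h : i = i1
    · subst h
      rw [Pi.single_eq_same, XK, Matrix.diagonal_apply_eq, mul_one, mul_one, hqi1]
    · rw [Pi.single_eq_of_ne h, XK, Matrix.diagonal_apply_ne _ h, zero_mul, mul_zero]
  -- v1 decomposes
  have htop : v1 ∈ Submodule.span ℂ {v} ⊔ W := by
    rw [hcompl.sup_eq_top]; trivial
  obtain ⟨x, hx, w, hw, hxw⟩ := Submodule.mem_sup.mp htop
  obtain ⟨t, rfl⟩ := Submodule.mem_span_singleton.mp hx
  have hw_eq : w = v1 - t • v := by rw [← hxw]; abel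
  -- project inside W to show v1 ∈ W (i.e. t = 0 or v ∈ W)
  have hKw : (XK q lam m).mulVec w - (lam * q) • w ∈ W :=
    W.sub_mem (hWK w hw) (W.smul_mem _ hw)
  have hKw_eq : (XK q lam m).mulVec w - (lam * q) • w = (t * (lam * q - lam)) • v := by
    rw [hw_eq, Matrix.mulVec_sub, Matrix.mulVec_smul, hKv, hKv1]
    funext i
    simp only [Pi.sub_apply, Pi.smul_apply, smul_eq_mul]
    ring
  have hv1W : v1 ∈ W := by
    by_cases ht : t = 0
    · rw [hw_eq, ht, zero_smul, sub_zero] at hw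
      exact hw
    · exfalso
      apply hvnotW
      have hcoef : t * (lam * q - lam) ≠ 0 := by
        apply mul_ne_zero ht
        intro h
        apply hq1
        have h2 : lam * (q - 1) = 0 := by linear_combination h
        rcases mul_eq_zero.mp h2 with h' | h'
        · exact absurd h' hlam0
        · exact sub_eq_zero.mp h'
      have hmemW : (t * (lam * q - lam)) • v ∈ W := by
        rw [← hKw_eq]; exact hKw
      have := W.smul_mem (t * (lam * q - lam))⁻¹ hmemW
      rwa [smul_smul, inv_mul_cancel₀ hcoef, one_smul] at this
  exact hvnotW (by rw [← hFv1]; exact hWF v1 hv1W)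

end
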